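/- arXiv:2306.14498 — 6 statements merged into one kernel-verified Lean document; each statement's English description precedes it below -/
import Mathlib

section
/- Let l and l_f be natural numbers and let u_min ≤ 0 < ř_max be real numbers such that (ř_max − u_min)/log 2 ≤ l_f and 2·l_f < l − 1. Then for every real u with u_min ≤ u ≤ 0 and every real ř with −ř_max ≤ ř < ř_max, setting ď = u + ř, the three quantities exp(−ř)·2^{l_f}, exp(ď)·2^{l_f}, and exp(u)·2^{2·l_f} all lie in the interval [1, 2^{l−1}), and moreover (exp(ď)·2^{l_f})·(exp(−ř)·2^{l_f}) = exp(u)·2^{2·l_f}. (Correctness of the PP-Exp algorithm: no intermediate fixed-point value underflows below precision 2^{−l_f} or overflows the signed range of an l-bit ring, and the confusion-correction reconstruction recovers exp(u)·2^{2·l_f}.) -/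
/-- Correctness of the PP-Exp algorithm: no intermediate fixed-point value underflows
below precision `2^{-l_f}` or overflows the signed range of an `l`-bit ring, and the
confusion-correction reconstruction recovers `exp u * 2^(2*l_f)`.
Here `r` plays the role of the fixed-point mask `ř` drawn from `[-r_max, r_max)`. -/
theorem ppexp_correctness (l l_f : ℕ) (u_min r_max : ℝ)
    (hu_min : u_min ≤ 0) (hr_max : 0 < r_max)
    (h_lf_lower : (r_max - u_min) / Real.log 2 ≤ (l_f : ℝ))
    (h_lf_upper : 2 * l_f < l - 1) :
    ∀ u r : ℝ, u_min ≤ u → u ≤ 0 → -r_max ≤ r → r < r_max →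
      (1 ≤ Real.exp (-r) * 2 ^ l_f ∧ Real.exp (-r) * 2 ^ l_f < 2 ^ (l - 1)) ∧
      (1 ≤ Real.exp (u + r) * 2 ^ l_f ∧ Real.exp (u + r) * 2 ^ l_f < 2 ^ (l - 1)) ∧
      (1 ≤ Real.exp u * 2 ^ (2 * l_f) ∧ Real.exp u * 2 ^ (2 * l_f) < 2 ^ (l - 1)) ∧
      (Real.exp (u + r) * 2 ^ l_f) * (Real.exp (-r) * 2 ^ l_f)
        = Real.exp u * 2 ^ (2 * l_f) := by
  intro u r hu1 hu2 hr1 hr2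
  have hL : (0:ℝ) < Real.log 2 := Real.log_pos (by norm_num)
  have hA : r_max - u_min ≤ (l_f : ℝ) * Real.log 2 := by
    rw [div_le_iff₀ hL] at h_lf_lower; linarith
  have hexp2 : ((2:ℝ)) ^ l_f = Real.exp ((l_f : ℝ) * Real.log 2) := by
    rw [Real.exp_nat_mul, Real.exp_log (by norm_num : (0:ℝ) < 2)]
  have hexp2' : ((2:ℝ)) ^ (2 * l_f) = Real.exp ((2 * l_f : ℕ) * Real.log 2) := by
    rw [Real.exp_nat_mul, Real.exp_log (by norm_num : (0:ℝ) < 2)]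
  have hmono : ∀ x y : ℝ, x ≤ y → Real.exp x ≤ Real.exp y := fun x y h =>
    Real.exp_le_exp.mpr h
  have hpowle : (2:ℝ) ^ (2 * l_f) < 2 ^ (l - 1) := by
    exact pow_lt_pow_right₀ (by norm_num) h_lf_upper
  have hpos : (0:ℝ) < (2:ℝ) ^ l_f := by positivity
  -- bound: exp(r_max) ≤ 2^l_f
  have hub : Real.exp r_max ≤ 2 ^ l_f := by
    rw [hexp2]; exact hmono _ _ (by linarith)
  -- bound: 1 ≤ exp(u_min - r_max) * 2^l_f
  have hlb : 1 ≤ Real.exp (u_min - r_max) * 2 ^ l_f := by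
    rw [hexp2, ← Real.exp_add]
    rw [show (1:ℝ) = Real.exp 0 by simp]
    exact hmono _ _ (by linarith)
  refine ⟨⟨?_, ?_⟩, ⟨?_, ?_⟩, ⟨?_, ?_⟩, ?_⟩
  · calc (1:ℝ) ≤ Real.exp (u_min - r_max) * 2 ^ l_f := hlb
      _ ≤ Real.exp (-r) * 2 ^ l_f := by
          exact mul_le_mul_of_nonneg_right (hmono _ _ (by linarith)) (le_of_lt hpos)
  · calc Real.exp (-r) * 2 ^ l_f ≤ Real.exp r_max * 2 ^ l_f :=
          mul_le_mul_of_nonneg_right (hmono _ _ (by linarith)) (le_of_lt hpos)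
      _ ≤ 2 ^ l_f * 2 ^ l_f := mul_le_mul_of_nonneg_right hub (le_of_lt hpos)
      _ = 2 ^ (2 * l_f) := by rw [← pow_add]; ring_nf
      _ < 2 ^ (l - 1) := hpowle
  · calc (1:ℝ) ≤ Real.exp (u_min - r_max) * 2 ^ l_f := hlb
      _ ≤ Real.exp (u + r) * 2 ^ l_f :=
          mul_le_mul_of_nonneg_right (hmono _ _ (by linarith)) (le_of_lt hpos)
  · calc Real.exp (u + r) * 2 ^ l_f ≤ Real.exp r_max * 2 ^ l_f :=
          mul_le_mul_of_nonneg_right (hmono _ _ (by linarith)) (le_of_lt hpos)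
      _ ≤ 2 ^ l_f * 2 ^ l_f := mul_le_mul_of_nonneg_right hub (le_of_lt hpos)
      _ = 2 ^ (2 * l_f) := by rw [← pow_add]; ring_nf
      _ < 2 ^ (l - 1) := hpowle
  · have : 1 ≤ Real.exp u * 2 ^ l_f := by
      calc (1:ℝ) ≤ Real.exp (u_min - r_max) * 2 ^ l_f := hlb
        _ ≤ Real.exp u * 2 ^ l_f :=
            mul_le_mul_of_nonneg_right (hmono _ _ (by linarith)) (le_of_lt hpos)
    have h1 : (1:ℝ) ≤ 2 ^ l_f := one_le_pow₀ (by norm_num)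
    calc (1:ℝ) ≤ Real.exp u * 2 ^ l_f := this
      _ ≤ Real.exp u * 2 ^ l_f * 2 ^ l_f := le_mul_of_one_le_right (by positivity) h1
      _ = Real.exp u * 2 ^ (2 * l_f) := by rw [mul_assoc, ← pow_add]; ring_nf
  · calc Real.exp u * 2 ^ (2 * l_f) ≤ 1 * 2 ^ (2 * l_f) :=
        mul_le_mul_of_nonneg_right (Real.exp_le_one_iff.mpr hu2) (by positivity)
      _ = 2 ^ (2 * l_f) := one_mul _
      _ < 2 ^ (l - 1) := hpowle
  · rw [show Real.exp (u + r) * 2 ^ l_f * (Real.exp (-r) * 2 ^ l_f)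
        = (Real.exp (u + r) * Real.exp (-r)) * (2 ^ l_f * 2 ^ l_f) by ring,
      ← Real.exp_add, ← pow_add]
    ring_nf
end

section
/- Let m_u and m_r be natural numbers with 1 ≤ m_u ≤ m_r. If u is drawn uniformly from {0, …, m_u − 1} and, independently, r is drawn uniformly from {0, …, m_r − 1}, then the probability that the consistent set S_{u+r} equals the full set {0, …, m_u − 1} (i.e. |S_{u+r}| = m_u, so revealing u + r leaks no information about u) is (m_r − m_u + 1)/m_r. Equivalently, the number of pairs (u, r) ∈ {0,…,m_u−1} × {0,…,m_r−1} with |S_{u+r}| = m_u equals m_u·(m_r − m_u + 1). (Security probability of PP-Exp.) -/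
/-- The consistent set `S_d = {u ∈ {0,…,m_u−1} : ∃ r ∈ {0,…,m_r−1}, u + r = d}`:
the set of private inputs compatible with the revealed masked value `d`. -/
def consistentSet (m_u m_r d : ℕ) : Finset ℕ :=
  (Finset.range m_u).filter (fun u => ∃ r ∈ Finset.range m_r, u + r = d)

lemma consistentSet_card_eq_iff (m_u m_r d : ℕ) (h1 : 1 ≤ m_u) :
    (consistentSet m_u m_r d).card = m_u ↔ (m_u ≤ d + 1 ∧ d < m_r) := by
  have hsub : consistentSet m_u m_r d ⊆ Finset.range m_u := Finset.filter_subset _ _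
  constructor
  · intro h
    have heq : consistentSet m_u m_r d = Finset.range m_u := by
      apply Finset.eq_of_subset_of_card_le hsub
      simp [h]
    have hall : ∀ u ∈ Finset.range m_u, ∃ r ∈ Finset.range m_r, u + r = d := by
      intro u hu
      have : u ∈ consistentSet m_u m_r d := heq ▸ hu
      exact (by simpa [consistentSet] using this : u < m_u ∧ ∃ r < m_r, u + r = d).2.imp (fun r h => ⟨Finset.mem_range.mpr h.1, h.2⟩)
    have h0 := hall 0 (by simp; omega)
    have hm := hall (m_u - 1) (by simp; omega)
    simp only [Finset.mem_range] at h0 hm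
    obtain ⟨r0, hr0, he0⟩ := h0
    obtain ⟨r1, hr1, he1⟩ := hm
    omega
  · intro ⟨ha, hb⟩
    have heq : consistentSet m_u m_r d = Finset.range m_u := by
      apply Finset.filter_true_of_mem
      intro u hu
      simp only [Finset.mem_range] at hu ⊢
      exact ⟨d - u, by omega, by omega⟩
    simp [heq]

/-- Security probability of PP-Exp: if `u` is uniform on `{0,…,m_u−1}` and `r` is an
independent uniform mask on `{0,…,m_r−1}`, the probability that revealing `u + r`
leaks no information about `u` (i.e. the consistent set has full size `m_u`) is
`(m_r − m_u + 1)/m_r`; equivalently, the number of such pairs `(u, r)` is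
`m_u * (m_r − m_u + 1)`. -/
theorem ppexp_security_probability (m_u m_r : ℕ) (h1 : 1 ≤ m_u) (h2 : m_u ≤ m_r) :
    (((((Finset.range m_u) ×ˢ (Finset.range m_r)).filter
        (fun p => (consistentSet m_u m_r (p.1 + p.2)).card = m_u)).card : ℚ)
      / ((m_u : ℚ) * (m_r : ℚ)) = ((m_r - m_u + 1 : ℕ) : ℚ) / (m_r : ℚ)) ∧
    ((((Finset.range m_u) ×ˢ (Finset.range m_r)).filter
        (fun p => (consistentSet m_u m_r (p.1 + p.2)).card = m_u)).card
      = m_u * (m_r - m_u + 1)) := by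
  have hcard : (((Finset.range m_u) ×ˢ (Finset.range m_r)).filter
        (fun p => (consistentSet m_u m_r (p.1 + p.2)).card = m_u)).card
      = m_u * (m_r - m_u + 1) := by
    rw [Finset.card_filter, Finset.sum_product]
    have hinner : ∀ u ∈ Finset.range m_u,
        (∑ r ∈ Finset.range m_r,
          if (consistentSet m_u m_r (u + r)).card = m_u then 1 else 0)
        = m_r - m_u + 1 := by
      intro u hu
      simp only [Finset.mem_range] at hu
      rw [← Finset.card_filter]
      have : (Finset.range m_r).filter
          (fun r => (consistentSet m_u m_r (u + r)).card = m_u)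
          = Finset.Ico (m_u - 1 - u) (m_r - u) := by
        ext r
        simp only [Finset.mem_filter, Finset.mem_range, Finset.mem_Ico,
          consistentSet_card_eq_iff m_u m_r (u + r) h1]
        omega
      rw [this, Nat.card_Ico]
      omega
    rw [Finset.sum_congr rfl hinner, Finset.sum_const, Finset.card_range, smul_eq_mul]
  refine ⟨?_, hcard⟩
  rw [hcard]
  push_cast
  have hmu : (m_u : ℚ) ≠ 0 := by positivity
  have hmr : (m_r : ℚ) ≠ 0 := by
    have : 1 ≤ m_r := le_trans h1 h2
    positivity
  field_simp
end

section
/- Let m_u and m_r be natural numbers with 1 ≤ m_u ≤ m_r. If u is drawn uniformly from {0, …, m_u − 1} and, independently, r is drawn uniformly from {0, …, m_r − 1}, then the expected value of 1/|S_{u+r}| equals (m_u + m_r − 1)/(m_u·m_r). Equivalently, the sum over all pairs (u, r) ∈ {0,…,m_u−1} × {0,…,m_r−1} of the rational numbers 1/|S_{u+r}| equals m_u + m_r − 1. (Expected degree of information leakage of PP-Exp.) -/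
lemma fiber_card (m_u m_r d : ℕ) :
    (((Finset.range m_u) ×ˢ (Finset.range m_r)).filter (fun p => p.1 + p.2 = d)).card
      = (consistentSet m_u m_r d).card := by
  apply Finset.card_bij (fun p _ => p.1)
  · rintro ⟨u, r⟩ hp
    simp only [Finset.mem_filter, Finset.mem_product, Finset.mem_range] at hp
    simp only [consistentSet, Finset.mem_filter, Finset.mem_range]
    exact ⟨hp.1.1, r, by simp [Finset.mem_range, hp.1.2], hp.2⟩
  · rintro ⟨u, r⟩ hp ⟨u', r'⟩ hq h
    simp only [Finset.mem_filter] at hp hq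
    simp only at h
    simp only [Prod.mk.injEq]
    omega
  · intro u hu
    simp only [consistentSet, Finset.mem_filter, Finset.mem_range] at hu
    obtain ⟨hu1, r, hr, hur⟩ := hu
    exact ⟨(u, r), by simp [Finset.mem_filter, Finset.mem_product, Finset.mem_range,
      hu1, hr, hur]⟩

lemma card_pos' (m_u m_r d : ℕ) (h1 : 1 ≤ m_u) (h1' : 1 ≤ m_r)
    (hd : d < m_u + m_r - 1) :
    (consistentSet m_u m_r d).card ≠ 0 := by
  rcases le_total d (m_u - 1) with hle | hle
  · refine Finset.card_ne_zero.mpr ⟨d, ?_⟩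
    simp only [consistentSet, Finset.mem_filter, Finset.mem_range]
    exact ⟨by omega, 0, by omega, by omega⟩
  · refine Finset.card_ne_zero.mpr ⟨m_u - 1, ?_⟩
    simp only [consistentSet, Finset.mem_filter, Finset.mem_range]
    exact ⟨by omega, d - (m_u - 1), by omega, by omega⟩

/-- Expected degree of information leakage of PP-Exp: if `u` is uniform on
`{0,…,m_u−1}` and `r` is an independent uniform mask on `{0,…,m_r−1}`, the expected
value of `1/|S_{u+r}|` is `(m_u + m_r − 1)/(m_u * m_r)`; equivalently, the sum of
`1/|S_{u+r}|` over all pairs `(u, r)` equals `m_u + m_r − 1`. -/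
theorem ppexp_expected_leakage (m_u m_r : ℕ) (h1 : 1 ≤ m_u) (h2 : m_u ≤ m_r) :
    ((∑ p ∈ (Finset.range m_u) ×ˢ (Finset.range m_r),
        (1 : ℚ) / ((consistentSet m_u m_r (p.1 + p.2)).card : ℚ))
      / ((m_u : ℚ) * (m_r : ℚ))
      = ((m_u : ℚ) + (m_r : ℚ) - 1) / ((m_u : ℚ) * (m_r : ℚ))) ∧
    (∑ p ∈ (Finset.range m_u) ×ˢ (Finset.range m_r),
        (1 : ℚ) / ((consistentSet m_u m_r (p.1 + p.2)).card : ℚ)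
      = (m_u : ℚ) + (m_r : ℚ) - 1) := by
  have key : (∑ p ∈ (Finset.range m_u) ×ˢ (Finset.range m_r),
        (1 : ℚ) / ((consistentSet m_u m_r (p.1 + p.2)).card : ℚ)
      = (m_u : ℚ) + (m_r : ℚ) - 1) := by
    have hmaps : ∀ p ∈ (Finset.range m_u) ×ˢ (Finset.range m_r),
        (fun p : ℕ × ℕ => p.1 + p.2) p ∈ Finset.range (m_u + m_r - 1) := by
      rintro ⟨u, r⟩ hp
      simp only [Finset.mem_product, Finset.mem_range] at hp ⊢
      omega
    rw [← Finset.sum_fiberwise_of_maps_to hmaps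
      (fun p => (1 : ℚ) / ((consistentSet m_u m_r (p.1 + p.2)).card : ℚ))]
    have step : ∀ d ∈ Finset.range (m_u + m_r - 1),
        (∑ p ∈ ((Finset.range m_u) ×ˢ (Finset.range m_r)).filter
            (fun p => p.1 + p.2 = d),
          (1 : ℚ) / ((consistentSet m_u m_r (p.1 + p.2)).card : ℚ)) = 1 := by
      intro d hd
      have e1 : (∑ p ∈ ((Finset.range m_u) ×ˢ (Finset.range m_r)).filter
            (fun p => p.1 + p.2 = d),
          (1 : ℚ) / ((consistentSet m_u m_r (p.1 + p.2)).card : ℚ))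
          = ∑ _p ∈ ((Finset.range m_u) ×ˢ (Finset.range m_r)).filter
            (fun p => p.1 + p.2 = d),
          (1 : ℚ) / ((consistentSet m_u m_r d).card : ℚ) := by
        refine Finset.sum_congr rfl ?_
        intro p hp
        rw [(Finset.mem_filter.mp hp).2]
      rw [e1, Finset.sum_const, fiber_card, nsmul_eq_mul]
      have h0 := card_pos' m_u m_r d h1 (le_trans h1 h2) (Finset.mem_range.mp hd)
      field_simp
    rw [Finset.sum_congr rfl step, Finset.sum_const, nsmul_eq_mul, mul_one,
      Finset.card_range]
    have h3 : (1 : ℕ) ≤ m_u + m_r := by omega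
    push_cast [Nat.cast_sub h3]
    ring
  exact ⟨by rw [key], key⟩
end

section
/- Let m_u and m_r be natural numbers with 2 ≤ m_u ≤ m_r. If u is drawn uniformly from {0, …, m_u − 1} and, independently, r is drawn uniformly from {0, …, m_r − 1}, then the probability that |S_{u+r}| = 1 (i.e. the revealed value u + r determines u uniquely) is 2/(m_u·m_r). Equivalently, exactly 2 pairs (u, r) ∈ {0,…,m_u−1} × {0,…,m_r−1} satisfy |S_{u+r}| = 1, namely the pairs where both u and r take their minimum values or both take their maximum values. -/
lemma consistentSet_eq_Ico (m_u m_r d : ℕ) :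
    consistentSet m_u m_r d = Finset.Ico (d + 1 - m_r) (min m_u (d + 1)) := by
  ext u
  simp only [consistentSet, Finset.mem_filter, Finset.mem_range, Finset.mem_Ico]
  constructor
  · rintro ⟨hu, r, hr, rfl⟩
    omega
  · intro h
    refine ⟨by omega, d - u, by omega, by omega⟩

lemma consistentSet_card (m_u m_r d : ℕ) :
    (consistentSet m_u m_r d).card = min m_u (d + 1) - (d + 1 - m_r) := by
  rw [consistentSet_eq_Ico, Nat.card_Ico]

/-- If `u` is uniform on `{0,…,m_u−1}` and `r` is an independent uniform mask on
`{0,…,m_r−1}`, the probability that the revealed value `u + r` determines `u`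
uniquely (i.e. `|S_{u+r}| = 1`) is `2/(m_u * m_r)`; equivalently exactly 2 pairs
`(u, r)` satisfy `|S_{u+r}| = 1`, namely the pair where both take their minimum
values and the pair where both take their maximum values. -/
theorem ppexp_exact_leakage_probability (m_u m_r : ℕ) (h1 : 2 ≤ m_u) (h2 : m_u ≤ m_r) :
    (((((Finset.range m_u) ×ˢ (Finset.range m_r)).filter
        (fun p => (consistentSet m_u m_r (p.1 + p.2)).card = 1)).card : ℚ)
      / ((m_u : ℚ) * (m_r : ℚ)) = 2 / ((m_u : ℚ) * (m_r : ℚ))) ∧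
    ((((Finset.range m_u) ×ˢ (Finset.range m_r)).filter
        (fun p => (consistentSet m_u m_r (p.1 + p.2)).card = 1)).card = 2) ∧
    ((((Finset.range m_u) ×ˢ (Finset.range m_r)).filter
        (fun p => (consistentSet m_u m_r (p.1 + p.2)).card = 1))
      = {(0, 0), (m_u - 1, m_r - 1)}) := by
  have hset : (((Finset.range m_u) ×ˢ (Finset.range m_r)).filter
        (fun p => (consistentSet m_u m_r (p.1 + p.2)).card = 1))
      = {(0, 0), (m_u - 1, m_r - 1)} := by
    ext ⟨u, r⟩
    simp only [Finset.mem_filter, Finset.mem_product, Finset.mem_range,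
      consistentSet_card, Finset.mem_insert, Finset.mem_singleton, Prod.mk.injEq]
    omega
  have hcard : (((Finset.range m_u) ×ˢ (Finset.range m_r)).filter
        (fun p => (consistentSet m_u m_r (p.1 + p.2)).card = 1)).card = 2 := by
    rw [hset]
    exact Finset.card_pair (by simp [Prod.ext_iff]; omega)
  refine ⟨?_, hcard, hset⟩
  rw [hcard]
  norm_num
end

section
/- Let m_u and m_r be natural numbers with 1 ≤ m_u ≤ m_r. Then the number of natural numbers d with d ≤ m_u + m_r − 2 for which the consistent set S_d is the full set {0, …, m_u − 1} (i.e. |S_d| = m_u) equals m_r − m_u + 1. -/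
/-- The number of natural numbers `d ≤ m_u + m_r − 2` for which the consistent set
`S_d` is the full set `{0,…,m_u−1}` (i.e. `|S_d| = m_u`) equals `m_r − m_u + 1`. -/
theorem consistentSet_full_count (m_u m_r : ℕ) (h1 : 1 ≤ m_u) (h2 : m_u ≤ m_r) :
    ((Finset.range (m_u + m_r - 1)).filter
        (fun d => (consistentSet m_u m_r d).card = m_u)).card = m_r - m_u + 1 := by
  have key : ∀ d, (consistentSet m_u m_r d).card = m_u ↔ (m_u - 1 ≤ d ∧ d < m_r) := by
    intro d
    constructor
    · intro h
      have heq : consistentSet m_u m_r d = Finset.range m_u :=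
        Finset.eq_of_subset_of_card_le (Finset.filter_subset _ _)
          (by rw [h, Finset.card_range])
      constructor
      · have hm : m_u - 1 ∈ consistentSet m_u m_r d := by
          rw [heq, Finset.mem_range]; omega
        simp only [consistentSet, Finset.mem_filter, Finset.mem_range] at hm
        obtain ⟨_, r, hr, hr2⟩ := hm
        omega
      · have hm : 0 ∈ consistentSet m_u m_r d := by
          rw [heq, Finset.mem_range]; omega
        simp only [consistentSet, Finset.mem_filter, Finset.mem_range] at hm
        obtain ⟨_, r, hr, hr2⟩ := hm
        omega
    · rintro ⟨ha, hb⟩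
      have heq : consistentSet m_u m_r d = Finset.range m_u := by
        rw [consistentSet, Finset.filter_eq_self]
        intro u hu
        rw [Finset.mem_range] at hu
        exact ⟨d - u, Finset.mem_range.mpr (by omega), by omega⟩
      rw [heq, Finset.card_range]
  have hset : ((Finset.range (m_u + m_r - 1)).filter
      (fun d => (consistentSet m_u m_r d).card = m_u)) = Finset.Ico (m_u - 1) m_r := by
    ext d
    simp only [Finset.mem_filter, Finset.mem_range, Finset.mem_Ico, key]
    omega
  rw [hset, Nat.card_Ico]
  omega
end

section
/- Let m_u and m_r be natural numbers with 1 ≤ m_u ≤ m_r, and let k be a natural number with 1 ≤ k ≤ m_u − 1. Then the number of natural numbers d with d ≤ m_u + m_r − 2 for which |S_d| = k equals exactly 2 (namely d = k − 1 and d = m_u + m_r − 1 − k). -/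
/-- For `1 ≤ k ≤ m_u − 1`, the number of natural numbers `d ≤ m_u + m_r − 2` for
which `|S_d| = k` equals exactly 2, namely `d = k − 1` and `d = m_u + m_r − 1 − k`. -/
theorem consistentSet_card_eq_k_count (m_u m_r k : ℕ) (h1 : 1 ≤ m_u) (h2 : m_u ≤ m_r)
    (hk1 : 1 ≤ k) (hk2 : k ≤ m_u - 1) :
    ((Finset.range (m_u + m_r - 1)).filter
        (fun d => (consistentSet m_u m_r d).card = k)).card = 2 ∧
    ((Finset.range (m_u + m_r - 1)).filter
        (fun d => (consistentSet m_u m_r d).card = k))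
      = {k - 1, m_u + m_r - 1 - k} := by
  have hcard : ∀ d, (consistentSet m_u m_r d).card = min m_u (d + 1) - (d + 1 - m_r) := by
    intro d
    have h : consistentSet m_u m_r d = Finset.Ico (d + 1 - m_r) (min m_u (d + 1)) := by
      ext u
      simp only [consistentSet, Finset.mem_filter, Finset.mem_range, Finset.mem_Ico,
        lt_min_iff]
      constructor
      · rintro ⟨hu, r, hr, hur⟩; omega
      · rintro ⟨h1, h2, h3⟩; exact ⟨h2, d - u, by omega, by omega⟩
    rw [h, Nat.card_Ico]
  have hset : ((Finset.range (m_u + m_r - 1)).filter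
      (fun d => (consistentSet m_u m_r d).card = k))
      = {k - 1, m_u + m_r - 1 - k} := by
    ext d
    simp only [Finset.mem_filter, Finset.mem_range, hcard, Finset.mem_insert,
      Finset.mem_singleton]
    rcases le_total m_u (d + 1) with h | h
    · rw [min_eq_left h]; omega
    · rw [min_eq_right h]; omega
  refine ⟨?_, hset⟩
  rw [hset, Finset.card_insert_of_notMem (by simp; omega), Finset.card_singleton]
end
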